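/- Let p and q be distinct primes. Consider the group homomorphism Φ from U(1) × SU(p) × SU(q) to the unitary group of pq×pq complex matrices given by Φ(c, g, h) = c·(g ⊗ h), where ⊗ is the Kronecker product. Then the kernel of Φ is exactly the cyclic subgroup generated by the element (ζ_p^{-1}·ζ_q^{-1}, ζ_p·1_p, ζ_q·1_q); consequently, the quotient group G_SM(p,q) = (U(1)×SU(p)×SU(q))/⟨(ζ_p^{-1}ζ_q^{-1}, ζ_p·1_p, ζ_q·1_q)⟩ is isomorphic to the image of Φ. -/

import Mathlib

open scoped Kronecker

/-- `ζ n = exp(2πi/n)`, the standard primitive `n`-th root of unity in `ℂ`. -/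
noncomputable def zeta (n : ℕ) : ℂ := Complex.exp (2 * Real.pi * Complex.I / n)

/-- The special unitary group `SU(n)`, as the subgroup of the unitary group
`Matrix.unitaryGroup n ℂ` consisting of the matrices of determinant `1`. -/
noncomputable def SU (n : Type*) [DecidableEq n] [Fintype n] :
    Subgroup (Matrix.unitaryGroup n ℂ) :=
  MonoidHom.ker ((Units.map (Matrix.detMonoidHom : Matrix n n ℂ →* ℂ)).comp Unitary.toUnits)

namespace GSMaux
open Matrix

set_option linter.unusedSectionVars false

variable {m n : Type*} [Fintype m] [DecidableEq m] [Fintype n] [DecidableEq n]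

lemma kron_conjT (A : Matrix m m ℂ) (B : Matrix n n ℂ) :
    (A ⊗ₖ B)ᴴ = Aᴴ ⊗ₖ Bᴴ := by
  ext ⟨i, j⟩ ⟨i', j'⟩
  simp [conjTranspose_apply, kroneckerMap_apply]

lemma mem_unitary_aux (c : Circle) (g : unitaryGroup m ℂ) (h : unitaryGroup n ℂ) :
    (c : ℂ) • ((g : Matrix m m ℂ) ⊗ₖ (h : Matrix n n ℂ)) ∈ unitaryGroup (m × n) ℂ := by
  rw [Matrix.mem_unitaryGroup_iff']
  have hg : star (g : Matrix m m ℂ) * g = 1 := g.2.1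
  have hh : star (h : Matrix n n ℂ) * h = 1 := h.2.1
  have hc : star (c : ℂ) * c = 1 := by
    rw [Complex.star_def, ← Complex.normSq_eq_conj_mul_self, Circle.normSq_coe, Complex.ofReal_one]
  rw [star_smul, smul_mul_smul_comm, hc, Matrix.star_eq_conjTranspose, kron_conjT,
    ← mul_kronecker_mul]
  rw [← Matrix.star_eq_conjTranspose, ← Matrix.star_eq_conjTranspose, hg, hh,
    one_kronecker_one, one_smul]

lemma det_SU_aux {s : Matrix.unitaryGroup m ℂ} (hs : s ∈ SU m) :
    ((s : Matrix.unitaryGroup m ℂ) : Matrix m m ℂ).det = 1 := by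
  rw [SU, MonoidHom.mem_ker] at hs
  have := congrArg Units.val hs
  simpa using this

/-- The Kronecker-product homomorphism `Φ`. -/
noncomputable def Phi (p q : ℕ) :
    (Circle × SU (Fin p) × SU (Fin q)) →* Matrix.unitaryGroup (Fin p × Fin q) ℂ where
  toFun x := ⟨(x.1 : ℂ) •
      (((x.2.1 : Matrix.unitaryGroup (Fin p) ℂ) : Matrix (Fin p) (Fin p) ℂ) ⊗ₖ
        ((x.2.2 : Matrix.unitaryGroup (Fin q) ℂ) : Matrix (Fin q) (Fin q) ℂ)),
    mem_unitary_aux _ _ _⟩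
  map_one' := by
    ext1
    simp [one_kronecker_one]
  map_mul' x y := Subtype.ext <| by
    show ((x.1 * y.1 : Circle) : ℂ) •
        ((((x.2.1 * y.2.1 : SU (Fin p)) : Matrix.unitaryGroup (Fin p) ℂ) : Matrix (Fin p) (Fin p) ℂ) ⊗ₖ
          (((x.2.2 * y.2.2 : SU (Fin q)) : Matrix.unitaryGroup (Fin q) ℂ) : Matrix (Fin q) (Fin q) ℂ)) =
      ((x.1 : ℂ) • (_ ⊗ₖ _)) * ((y.1 : ℂ) • (_ ⊗ₖ _))
    push_cast
    rw [mul_kronecker_mul, smul_mul_smul_comm]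

lemma Phi_apply (p q : ℕ) (x : Circle × SU (Fin p) × SU (Fin q)) :
    (Phi p q x : Matrix (Fin p × Fin q) (Fin p × Fin q) ℂ) =
      (x.1 : ℂ) •
        (((x.2.1 : Matrix.unitaryGroup (Fin p) ℂ) : Matrix (Fin p) (Fin p) ℂ) ⊗ₖ
          ((x.2.2 : Matrix.unitaryGroup (Fin q) ℂ) : Matrix (Fin q) (Fin q) ℂ)) := rfl

lemma zeta_ne_zero (n : ℕ) : zeta n ≠ 0 := Complex.exp_ne_zero _

lemma isPrim (n : ℕ) (hn : n ≠ 0) : IsPrimitiveRoot (zeta n) n := by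
  unfold zeta; exact Complex.isPrimitiveRoot_exp n hn

/-- If a scalar multiple of a Kronecker product is 1, both factors are scalar. -/
lemma scalar_of_kron_eq_one {c : ℂ} (hc : c ≠ 0)
    {A : Matrix m m ℂ} {B : Matrix n n ℂ} (hA : A ≠ 0) (hB : B ≠ 0)
    (h : c • (A ⊗ₖ B) = 1) :
    ∃ lam mu : ℂ, A = lam • 1 ∧ B = mu • 1 ∧ c * (lam * mu) = 1 := by
  have key : ∀ (i i' : m) (j j' : n),
      c * (A i i' * B j j') = if i = i' ∧ j = j' then 1 else 0 := by
    intro i i' j j'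
    have := congrFun (congrFun h (i, j)) (i', j')
    simpa [Matrix.one_apply, Prod.ext_iff, kroneckerMap_apply] using this
  obtain ⟨i0, hi0⟩ : ∃ i, A i ≠ 0 := by
    by_contra hcon; push_neg at hcon; exact hA (funext hcon)
  obtain ⟨i0', hA0⟩ : ∃ i', A i0 i' ≠ 0 := by
    by_contra hcon; push_neg at hcon; exact hi0 (funext hcon)
  obtain ⟨j0, hj0⟩ : ∃ j, B j ≠ 0 := by
    by_contra hcon; push_neg at hcon; exact hB (funext hcon)
  obtain ⟨j0', hB0⟩ : ∃ j', B j0 j' ≠ 0 := by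
    by_contra hcon; push_neg at hcon; exact hj0 (funext hcon)
  have hii : i0 = i0' := by
    by_contra hne
    have := key i0 i0' j0 j0'
    simp [hne] at this
    rcases this with h1 | h1 | h1
    · exact hc h1
    · exact hA0 h1
    · exact hB0 h1
  subst hii
  have hjj : j0 = j0' := by
    by_contra hne
    have := key i0 i0 j0 j0'
    simp [hne] at this
    rcases this with h1 | h1 | h1
    · exact hc h1
    · exact hA0 h1
    · exact hB0 h1
  subst hjj
  refine ⟨A i0 i0, B j0 j0, ?_, ?_, ?_⟩
  · ext i i'
    have h1 := key i i' j0 j0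
    have h2 := key i0 i0 j0 j0
    simp only [and_true] at h1 h2
    by_cases hii' : i = i'
    · subst hii'
      simp only [if_pos rfl] at h1 h2
      have : c * (A i i * B j0 j0) = c * (A i0 i0 * B j0 j0) := by rw [h1, h2]
      have := mul_left_cancel₀ hc this
      have := mul_right_cancel₀ hB0 this
      simp [Matrix.one_apply, this, Matrix.smul_apply]
    · simp only [if_neg hii'] at h1
      rcases mul_eq_zero.mp h1 with h | h
      · exact absurd h hc
      · rcases mul_eq_zero.mp h with h | h
        · simp [Matrix.one_apply, hii', h, Matrix.smul_apply]
        · exact absurd h hB0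
  · ext j j'
    have h1 := key i0 i0 j j'
    have h2 := key i0 i0 j0 j0
    simp only [true_and] at h1 h2
    by_cases hjj' : j = j'
    · subst hjj'
      simp only [if_pos rfl] at h1 h2
      have : c * (A i0 i0 * B j j) = c * (A i0 i0 * B j0 j0) := by rw [h1, h2]
      have := mul_left_cancel₀ hc this
      have : A i0 i0 * B j j = A i0 i0 * B j0 j0 := this
      have := mul_left_cancel₀ hA0 this
      simp [Matrix.one_apply, this, Matrix.smul_apply]
    · simp only [if_neg hjj'] at h1
      rcases mul_eq_zero.mp h1 with h | h
      · exact absurd h hc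
      · rcases mul_eq_zero.mp h with h | h
        · exact absurd h hA0
        · simp [Matrix.one_apply, hjj', h, Matrix.smul_apply]
  · have := key i0 i0 j0 j0
    simpa [mul_assoc] using this

end GSMaux

theorem kronecker_realization_of_GSM (p q : ℕ) (hp : p.Prime) (hq : q.Prime) (hpq : p ≠ q) :
    ∃ Φ : (Circle × SU (Fin p) × SU (Fin q)) →* Matrix.unitaryGroup (Fin p × Fin q) ℂ,
      (∀ x : Circle × SU (Fin p) × SU (Fin q),
        (Φ x : Matrix (Fin p × Fin q) (Fin p × Fin q) ℂ) =
          (x.1 : ℂ) •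
            (((x.2.1 : Matrix.unitaryGroup (Fin p) ℂ) : Matrix (Fin p) (Fin p) ℂ) ⊗ₖ
              ((x.2.2 : Matrix.unitaryGroup (Fin q) ℂ) : Matrix (Fin q) (Fin q) ℂ))) ∧
      (∀ x : Circle × SU (Fin p) × SU (Fin q),
        x ∈ Φ.ker ↔ ∃ k : ℤ,
          (x.1 : ℂ) = ((zeta p)⁻¹ * (zeta q)⁻¹) ^ k ∧
          ((x.2.1 : Matrix.unitaryGroup (Fin p) ℂ) : Matrix (Fin p) (Fin p) ℂ) =
            zeta p ^ k • (1 : Matrix (Fin p) (Fin p) ℂ) ∧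
          ((x.2.2 : Matrix.unitaryGroup (Fin q) ℂ) : Matrix (Fin q) (Fin q) ℂ) =
            zeta q ^ k • (1 : Matrix (Fin q) (Fin q) ℂ)) ∧
      Nonempty (((Circle × SU (Fin p) × SU (Fin q)) ⧸ Φ.ker) ≃* Φ.range) := by
  classical
  haveI : NeZero p := ⟨hp.ne_zero⟩
  haveI : NeZero q := ⟨hq.ne_zero⟩
  have hζp : zeta p ≠ 0 := GSMaux.zeta_ne_zero p
  have hζq : zeta q ≠ 0 := GSMaux.zeta_ne_zero q
  have hprimp : IsPrimitiveRoot (zeta p) p := GSMaux.isPrim p hp.ne_zero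
  have hprimq : IsPrimitiveRoot (zeta q) q := GSMaux.isPrim q hq.ne_zero
  refine ⟨GSMaux.Phi p q, GSMaux.Phi_apply p q, ?_, ⟨QuotientGroup.quotientKerEquivRange _⟩⟩
  intro x
  obtain ⟨c, g, h⟩ := x
  set A : Matrix (Fin p) (Fin p) ℂ := ((g : Matrix.unitaryGroup (Fin p) ℂ) : Matrix (Fin p) (Fin p) ℂ) with hAdef
  set B : Matrix (Fin q) (Fin q) ℂ := ((h : Matrix.unitaryGroup (Fin q) ℂ) : Matrix (Fin q) (Fin q) ℂ) with hBdef
  have hdetA : A.det = 1 := GSMaux.det_SU_aux g.2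
  have hdetB : B.det = 1 := GSMaux.det_SU_aux h.2
  have hker : (c, g, h) ∈ (GSMaux.Phi p q).ker ↔ (c : ℂ) • (A ⊗ₖ B) = 1 := by
    rw [MonoidHom.mem_ker, Subtype.ext_iff]
    rfl
  rw [hker]
  constructor
  · intro h1
    have hAne : A ≠ 0 := by
      intro h0
      rw [h0, Matrix.det_zero] at hdetA
      exact zero_ne_one hdetA
    have hBne : B ≠ 0 := by
      intro h0
      rw [h0, Matrix.det_zero] at hdetB
      exact zero_ne_one hdetB
    obtain ⟨lam, mu, hA, hB, hclm⟩ :=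
      GSMaux.scalar_of_kron_eq_one (Circle.coe_ne_zero c) hAne hBne h1
    have hlam : lam ^ p = 1 := by
      have := hdetA
      rw [hA, Matrix.det_smul, Matrix.det_one, mul_one, Fintype.card_fin] at this
      exact this
    have hmu : mu ^ q = 1 := by
      have := hdetB
      rw [hB, Matrix.det_smul, Matrix.det_one, mul_one, Fintype.card_fin] at this
      exact this
    obtain ⟨a, _, ha⟩ := hprimp.eq_pow_of_pow_eq_one hlam
    obtain ⟨b, _, hb⟩ := hprimq.eq_pow_of_pow_eq_one hmu
    have cop : Nat.Coprime p q := (Nat.coprime_primes hp hq).mpr hpq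
    obtain ⟨k0, hk0p, hk0q⟩ := Nat.chineseRemainder cop a b
    have hzp : zeta p ^ (k0 : ℤ) = lam := by
      have h1 : zeta p ^ ((a : ℤ) - k0) = 1 :=
        (hprimp.zpow_eq_one_iff_dvd _).mpr hk0p.dvd
      calc zeta p ^ (k0 : ℤ) = zeta p ^ (k0 : ℤ) * zeta p ^ ((a : ℤ) - k0) := by
              rw [h1, mul_one]
        _ = zeta p ^ (a : ℤ) := by rw [← zpow_add₀ hζp]; congr 1; ring
        _ = lam := by rw [zpow_natCast, ha]
    have hzq : zeta q ^ (k0 : ℤ) = mu := by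
      have h1 : zeta q ^ ((b : ℤ) - k0) = 1 :=
        (hprimq.zpow_eq_one_iff_dvd _).mpr hk0q.dvd
      calc zeta q ^ (k0 : ℤ) = zeta q ^ (k0 : ℤ) * zeta q ^ ((b : ℤ) - k0) := by
              rw [h1, mul_one]
        _ = zeta q ^ (b : ℤ) := by rw [← zpow_add₀ hζq]; congr 1; ring
        _ = mu := by rw [zpow_natCast, hb]
    have hinv : ((zeta p)⁻¹ * (zeta q)⁻¹) ^ (k0 : ℤ) =
        (zeta p ^ (k0 : ℤ) * zeta q ^ (k0 : ℤ))⁻¹ := by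
      rw [mul_zpow, inv_zpow, inv_zpow, mul_inv]
    refine ⟨(k0 : ℤ), ?_, ?_, ?_⟩
    · rw [hinv, hzp, hzq]
      exact eq_inv_of_mul_eq_one_left hclm
    · rw [hA, hzp]
    · rw [hB, hzq]
  · rintro ⟨k, hc, hA, hB⟩
    rw [hA, hB]
    rw [Matrix.smul_kronecker, Matrix.kronecker_smul, Matrix.one_kronecker_one, smul_smul,
      smul_smul, hc]
    have hone : ((zeta p)⁻¹ * (zeta q)⁻¹) ^ k * zeta p ^ k * zeta q ^ k = 1 := by
      rw [mul_zpow, inv_zpow, inv_zpow]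
      field_simp
    rw [hone, one_smul]
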